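/- Let f : ℝ^r → ℝ^r be a continuously differentiable map whose Jacobian matrix is symmetric at every point, i.e. for all a ∈ ℝ^r and all I, J ∈ {1, …, r} the partial derivatives satisfy ∂f_I/∂a_J (a) = ∂f_J/∂a_I (a). Then f is a gradient: there exists a differentiable function F : ℝ^r → ℝ such that ∂F/∂a_I (a) = f_I(a) for all a ∈ ℝ^r and all I ∈ {1, …, r}. -/

import Mathlib

open MeasureTheory Metric ContinuousLinearMap Finset

lemma aux_pi_sum {r : ℕ} {E : Type*} [NormedAddCommGroup E] [NormedSpace ℝ E]
    (L : (Fin r → ℝ) →L[ℝ] E) (v : Fin r → ℝ) :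
    L v = ∑ i, v i • L (Pi.single i 1) := by
  have hv : v = ∑ i, v i • (Pi.single i 1 : Fin r → ℝ) := by
    ext j
    simp [Pi.single_apply, Finset.sum_apply]
  conv_lhs => rw [hv]
  simp [map_sum]



/-- A continuously differentiable map `f : ℝ^r → ℝ^r` whose Jacobian matrix is symmetric
at every point is a gradient: there is a differentiable `F : ℝ^r → ℝ` whose partial
derivatives are the components of `f`. -/
theorem symmetric_jacobian_is_gradient
    {r : ℕ} (f : (Fin r → ℝ) → (Fin r → ℝ))
    (hf : ContDiff ℝ 1 f)
    (hsymm : ∀ (a : Fin r → ℝ) (I J : Fin r),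
      fderiv ℝ (fun x => f x I) a (Pi.single J 1) =
        fderiv ℝ (fun x => f x J) a (Pi.single I 1)) :
    ∃ F : (Fin r → ℝ) → ℝ, Differentiable ℝ F ∧
      ∀ (a : Fin r → ℝ) (I : Fin r), fderiv ℝ F a (Pi.single I 1) = f a I := by
  classical
  have hfd : Differentiable ℝ f := hf.differentiable one_ne_zero
  have hfc : Continuous f := hf.continuous
  have hf' : Continuous (fderiv ℝ f) := hf.continuous_fderiv one_ne_zero
  -- component derivatives
  have hcomp : ∀ (x : Fin r → ℝ) (J : Fin r),
      HasFDerivAt (fun y => f y J) ((proj J : (Fin r → ℝ) →L[ℝ] ℝ).comp (fderiv ℝ f x)) x := by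
    intro x J
    exact (proj J : (Fin r → ℝ) →L[ℝ] ℝ).hasFDerivAt.comp x (hfd x).hasFDerivAt
  have hsymm' : ∀ (x : Fin r → ℝ) (I J : Fin r),
      fderiv ℝ f x (Pi.single J 1) I = fderiv ℝ f x (Pi.single I 1) J := by
    intro x I J
    have h1 := (hcomp x I).fderiv
    have h2 := (hcomp x J).fderiv
    have h := hsymm x I J
    rw [h1, h2] at h
    simpa using h
  -- the integrand and its x-derivative
  set φ : (Fin r → ℝ) → ℝ → ℝ := fun x t => ∑ J, f (t • x) J * x J with hφdef
  set Φ : (Fin r → ℝ) → ℝ → ((Fin r → ℝ) →L[ℝ] ℝ) := fun x t =>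
    ∑ J, ((f (t • x) J) • (proj J : (Fin r → ℝ) →L[ℝ] ℝ)
      + (x J * t) • ((proj J : (Fin r → ℝ) →L[ℝ] ℝ).comp (fderiv ℝ f (t • x)))) with hΦdef
  have hΦderiv : ∀ (t : ℝ) (x : Fin r → ℝ), HasFDerivAt (fun y => φ y t) (Φ x t) x := by
    intro t x
    apply HasFDerivAt.fun_sum
    intro J _
    have hs : HasFDerivAt (fun y : Fin r → ℝ => t • y)
        (t • ContinuousLinearMap.id ℝ (Fin r → ℝ)) x := (hasFDerivAt_id x).const_smul t
    have h1 : HasFDerivAt (fun y : Fin r → ℝ => f (t • y) J)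
        (t • ((proj J : (Fin r → ℝ) →L[ℝ] ℝ).comp (fderiv ℝ f (t • x)))) x := by
      have := (hcomp (t • x) J).comp x hs
      refine this.congr_fderiv ?_
      ext v
      simp
    have h2 : HasFDerivAt (fun y : Fin r → ℝ => y J)
        (proj J : (Fin r → ℝ) →L[ℝ] ℝ) x := (proj J : (Fin r → ℝ) →L[ℝ] ℝ).hasFDerivAt
    have hm := h1.mul h2
    refine hm.congr_fderiv ?_
    rw [smul_smul]
  -- joint continuity of Φ
  have hsmulc : Continuous (fun p : (Fin r → ℝ) × ℝ => p.2 • p.1) :=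
    continuous_snd.smul continuous_fst
  have hΦcont : Continuous (fun p : (Fin r → ℝ) × ℝ => Φ p.1 p.2) := by
    apply continuous_finset_sum
    intro J _
    apply Continuous.add
    · exact ((continuous_apply J).comp (hfc.comp hsmulc)).smul continuous_const
    · apply Continuous.fun_smul
      · exact ((continuous_apply J).comp continuous_fst).mul continuous_snd
      · exact (compL ℝ (Fin r → ℝ) (Fin r → ℝ) ℝ (proj J)).continuous.comp
          (hf'.comp hsmulc)
  have hφcont : Continuous (fun p : (Fin r → ℝ) × ℝ => φ p.1 p.2) := by
    apply continuous_finset_sum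
    intro J _
    exact ((continuous_apply J).comp (hfc.comp hsmulc)).mul
      ((continuous_apply J).comp continuous_fst)
  -- define F
  set F : (Fin r → ℝ) → ℝ := fun x => ∫ t in (0:ℝ)..1, φ x t with hFdef
  -- the claimed derivative
  set L : (Fin r → ℝ) → ((Fin r → ℝ) →L[ℝ] ℝ) :=
    fun a => ∑ K, (f a K) • (proj K : (Fin r → ℝ) →L[ℝ] ℝ) with hLdef
  -- continuity in t of the inner FTC integrand, for fixed a
  have hinner : ∀ (a : Fin r → ℝ) (K : Fin r),
      Continuous (fun t : ℝ => f (t • a) K + t * (fderiv ℝ f (t • a) a K)) := by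
    intro a K
    apply Continuous.add
    · exact (continuous_apply K).comp (hfc.comp (continuous_id.smul continuous_const))
    · exact continuous_id.mul ((continuous_apply K).comp
        ((hf'.comp (continuous_id.smul continuous_const)).clm_apply continuous_const))
  have key : ∀ a : Fin r → ℝ, HasFDerivAt F (L a) a := by
    intro a
    -- bound on compact set
    obtain ⟨C, hC⟩ := ((isCompact_closedBall a 1).prod
      (isCompact_Icc : IsCompact (Set.Icc (0:ℝ) 1))).exists_bound_of_continuousOn
      hΦcont.continuousOn
    have hderiv : HasFDerivAt F (∫ t in (0:ℝ)..1, Φ a t) a := by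
      apply intervalIntegral.hasFDerivAt_integral_of_dominated_of_fderiv_le
        (bound := fun _ => C) (s := ball a 1) (hs := ball_mem_nhds a one_pos)
      · filter_upwards with x
        exact ((hφcont.comp (Continuous.prodMk_right x)).aestronglyMeasurable)
      · exact ((hφcont.comp (Continuous.prodMk_right a)).intervalIntegrable 0 1)
      · exact ((hΦcont.comp (Continuous.prodMk_right a)).aestronglyMeasurable)
      · filter_upwards with t
        intro ht x hx
        have ht' : t ∈ Set.Icc (0:ℝ) 1 := by
          rcases ht with ⟨h1, h2⟩
          exact ⟨le_of_lt (by simpa using h1), by simpa using h2⟩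
        exact hC (x, t) ⟨ball_subset_closedBall hx, ht'⟩
      · exact intervalIntegrable_const
      · filter_upwards with t
        intro ht x hx
        exact hΦderiv t x
    -- compute the integral
    have hint : IntervalIntegrable (fun t => Φ a t) volume 0 1 :=
      (hΦcont.comp (Continuous.prodMk_right a)).intervalIntegrable 0 1
    have heq : (∫ t in (0:ℝ)..1, Φ a t) = L a := by
      ext v
      rw [ContinuousLinearMap.intervalIntegral_apply hint v]
      have hpt : ∀ t : ℝ, Φ a t v
          = ∑ K, v K * (f (t • a) K + t * (fderiv ℝ f (t • a) a K)) := by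
        intro t
        have hv : (fderiv ℝ f (t • a)) v = ∑ i, v i • (fderiv ℝ f (t • a)) (Pi.single i 1) :=
          aux_pi_sum _ v
        have ha : (fderiv ℝ f (t • a)) a = ∑ i, a i • (fderiv ℝ f (t • a)) (Pi.single i 1) :=
          aux_pi_sum _ a
        simp only [hΦdef, ContinuousLinearMap.sum_apply, ContinuousLinearMap.add_apply,
          ContinuousLinearMap.smul_apply, ContinuousLinearMap.coe_comp', Function.comp_apply,
          proj_apply, smul_eq_mul]
        rw [Finset.sum_add_distrib]
        have hswap : ∑ J, (a J * t) * ((fderiv ℝ f (t • a)) v J)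
            = ∑ K, v K * (t * ((fderiv ℝ f (t • a)) a K)) := by
          calc ∑ J, (a J * t) * ((fderiv ℝ f (t • a)) v J)
              = ∑ J, ∑ K, (a J * t) * (v K * (fderiv ℝ f (t • a)) (Pi.single K 1) J) := by
                refine Finset.sum_congr rfl fun J _ => ?_
                rw [hv, Finset.sum_apply, Finset.mul_sum]
                exact Finset.sum_congr rfl fun K _ => by simp
            _ = ∑ K, ∑ J, (a J * t) * (v K * (fderiv ℝ f (t • a)) (Pi.single J 1) K) := by
                rw [Finset.sum_comm]
                exact Finset.sum_congr rfl fun K _ => Finset.sum_congr rfl fun J _ => by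
                  rw [hsymm' (t • a) K J]
            _ = ∑ K, v K * (t * ((fderiv ℝ f (t • a)) a K)) := by
                refine Finset.sum_congr rfl fun K _ => ?_
                rw [ha, Finset.sum_apply, Finset.mul_sum, Finset.mul_sum]
                refine Finset.sum_congr rfl fun J _ => ?_
                simp only [Pi.smul_apply, smul_eq_mul]
                ring
        rw [hswap, ← Finset.sum_add_distrib]
        exact Finset.sum_congr rfl fun K _ => by ring
      simp_rw [hpt]
      rw [intervalIntegral.integral_finset_sum]
      · have hK : ∀ K : Fin r,
            (∫ t in (0:ℝ)..1, v K * (f (t • a) K + t * (fderiv ℝ f (t • a) a K)))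
            = v K * f a K := by
          intro K
          have hg : ∀ t : ℝ, HasDerivAt (fun s : ℝ => s * f (s • a) K)
              (f (t • a) K + t * (fderiv ℝ f (t • a) a K)) t := by
            intro t
            have hsa : HasDerivAt (fun s : ℝ => s • a) a t := by
              simpa using (hasDerivAt_id t).smul_const a
            have h1 : HasDerivAt (fun s : ℝ => f (s • a) K) ((fderiv ℝ f (t • a) a) K) t := by
              have := ((hcomp (t • a) K).comp_hasDerivAt t hsa)
              simpa [Function.comp_def] using this
            have := (hasDerivAt_id t).mul h1
            simpa [mul_comm, add_comm, Pi.mul_def] using this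
          rw [intervalIntegral.integral_const_mul,
            intervalIntegral.integral_eq_sub_of_hasDerivAt (fun t _ => hg t)
              (((hinner a K)).intervalIntegrable 0 1)]
          simp
        rw [Finset.sum_congr rfl (fun K _ => hK K)]
        simp only [hLdef, ContinuousLinearMap.sum_apply, ContinuousLinearMap.smul_apply,
          proj_apply, smul_eq_mul]
        exact Finset.sum_congr rfl fun K _ => mul_comm _ _
      · intro K _
        exact (continuous_const.mul (hinner a K)).intervalIntegrable 0 1
    rw [heq] at hderiv
    exact hderiv
  refine ⟨F, fun a => (key a).differentiableAt, fun a I => ?_⟩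
  rw [(key a).fderiv]
  simp only [hLdef, ContinuousLinearMap.sum_apply, ContinuousLinearMap.smul_apply,
    proj_apply, smul_eq_mul]
  simp [Pi.single_apply]
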